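/- For every row index j ∈ {1,…,k} and every v ∈ V, the entry in row j of the decoded query column of a Q&A user satisfies Pr(Q(j, A) = v) = θ_j·((1−λ)·p_j(v) + (λ/(2m−1))·(1 − p_j(v))) + (1 − θ_j)/(2m). -/

import Mathlib

open scoped BigOperators

noncomputable section

/-- The value alphabet `V = {±1, …, ±m} ⊆ ℤ`. -/
def Vset (m : ℕ) : Finset ℤ := (Finset.Icc (-(m : ℤ)) m).erase 0

/-- Values as a (finite) type. -/
abbrev Vt (m : ℕ) : Type := {v : ℤ // v ∈ Vset m}

/-- Query matrices: `k × 2m` matrices whose rows are permutations of `V`,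
encoded row-wise as equivalences between column indices and values. -/
abbrev Query (k m : ℕ) : Type := Fin k → (Fin (2*m) ≃ Vt m)

/-- The randomized response channel `RR_λ` on `V`: probability that input `v`
is turned into output `w`. -/
def RR (m : ℕ) (lam : ℝ) (v w : Vt m) : ℝ :=
  if w = v then 1 - lam else lam / (2*m - 1)

lemma cardVt (m : ℕ) : Fintype.card (Vt m) = 2*m := by
  rw [Fintype.card_coe, Vset, Finset.card_erase_of_mem, Int.card_Icc]
  · omega
  · simp

lemma nonemptyQuery (k m : ℕ) : Nonempty (Query k m) :=
  ⟨fun _ => Fintype.equivOfCardEq (by rw [Fintype.card_fin, cardVt])⟩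

/-- For `g ≠ j`, the number of query matrices decoding to `v` in row `j`
is the same for every `v`; hence each indicator sums to `card/(2m)`. -/
lemma fiber_sum (m k : ℕ) (hm : 0 < m) {j g : Fin k} (hg : g ≠ j) (w v : Vt m) :
    (∑ q : Query k m, (if q j ((q g).symm w) = v then (1:ℝ) else 0))
      = (Fintype.card (Query k m) : ℝ) / (2*m) := by
  have hconst : ∀ v' : Vt m,
      (∑ q : Query k m, (if q j ((q g).symm w) = v' then (1:ℝ) else 0))
        = ∑ q : Query k m, (if q j ((q g).symm w) = v then (1:ℝ) else 0) := by
    intro v'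
    set s := Equiv.swap v v' with hs
    have hT : Function.Involutive
        (fun q : Query k m => Function.update q j ((q j).trans s)) := by
      intro q
      simp only [Function.update_idem, Function.update_self]
      have : ((q j).trans s).trans s = q j := by
        ext x; simp [hs, Equiv.swap_apply_self]
      rw [this, Function.update_eq_self]
    have := Equiv.sum_comp (hT.toPerm _)
      (fun q : Query k m => if q j ((q g).symm w) = v' then (1:ℝ) else 0)
    rw [← this]
    apply Finset.sum_congr rfl
    intro q _
    have hTj : (hT.toPerm _ q) j = (q j).trans s := by
      simp [Function.Involutive.toPerm, Function.update_self]
    have hTg : (hT.toPerm _ q) g = q g := by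
      simp [Function.Involutive.toPerm, Function.update_of_ne hg]
    rw [hTj, hTg]
    have : ((q j).trans s) ((q g).symm w) = s (q j ((q g).symm w)) := rfl
    rw [this]
    congr 1
    have : s (q j ((q g).symm w)) = v' ↔ q j ((q g).symm w) = v := by
      constructor
      · intro h
        have := congrArg s h
        rwa [Equiv.swap_apply_self, hs, Equiv.swap_apply_right] at this
      · intro h; rw [h, hs, Equiv.swap_apply_left]
    simp [this]
  have htotal : (∑ v' : Vt m, ∑ q : Query k m,
      (if q j ((q g).symm w) = v' then (1:ℝ) else 0))
        = (Fintype.card (Query k m) : ℝ) := by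
    rw [Finset.sum_comm]
    have : ∀ q : Query k m,
        (∑ v' : Vt m, (if q j ((q g).symm w) = v' then (1:ℝ) else 0)) = 1 := by
      intro q
      simp
    simp [this, Finset.card_univ]
  have h2 : ((2*m : ℕ) : ℝ) * (∑ q : Query k m,
      (if q j ((q g).symm w) = v then (1:ℝ) else 0))
        = (Fintype.card (Query k m) : ℝ) := by
    rw [← htotal]
    rw [Finset.sum_congr rfl (fun v' _ => hconst v')]
    rw [Finset.sum_const, Finset.card_univ, cardVt, nsmul_eq_mul]
  have hm2 : ((2*m : ℕ) : ℝ) ≠ 0 := by positivity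
  field_simp at h2 ⊢
  push_cast at h2 ⊢
  linarith [h2]

/-- For every row `j` and every `v ∈ V`, the decoded
query-column entry of a Q&A user satisfies
`Pr(Q(j,A) = v) = θ_j·((1−λ)p_j(v) + (λ/(2m−1))(1 − p_j(v))) + (1−θ_j)/(2m)`.
The probability is computed from the joint model: `G ~ θ`, `V ~ p_G`,
`Q` uniform on `𝒬`, `V̊ = RR_λ(V)`, and `A` the column of row `G` of `Q`
containing `V̊`. -/
theorem stmt4 (m k : ℕ) (hm : 0 < m) (hk : 2 ≤ k)
    (p : Fin k → Vt m → ℝ)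
    (hpsum : ∀ g, ∑ v : Vt m, p g v = 1)
    (hp : ∀ g v, 0 < p g v ∧ p g v < 1)
    (θ : Fin k → ℝ) (hθ0 : ∀ g, 0 ≤ θ g) (hθ1 : ∑ g, θ g = 1)
    (lam : ℝ) (hlam0 : 0 ≤ lam) (hlam1 : lam < 1 - 1/(2*m))
    (j : Fin k) (v : Vt m) :
    (∑ g : Fin k, ∑ v0 : Vt m, ∑ q : Query k m, ∑ w : Vt m,
        θ g * p g v0 * (1 / (Fintype.card (Query k m) : ℝ)) * RR m lam v0 w *
          (if q j ((q g).symm w) = v then (1:ℝ) else 0))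
      = θ j * ((1 - lam) * p j v + (lam/(2*m - 1)) * (1 - p j v))
          + (1 - θ j) / (2*m) := by
  have := nonemptyQuery k m
  set C : ℝ := (Fintype.card (Query k m) : ℝ) with hCdef
  have hC : 0 < C := by
    have h : 0 < Fintype.card (Query k m) := Fintype.card_pos
    rw [hCdef]; exact_mod_cast h
  have h2m : (0:ℝ) < 2*m := by positivity
  have h2m1 : (2*(m:ℝ) - 1) ≠ 0 := by
    have : (1:ℝ) ≤ m := by exact_mod_cast hm
    nlinarith
  -- sum over w of RR is 1
  have hRRsum : ∀ v0 : Vt m, ∑ w : Vt m, RR m lam v0 w = 1 := by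
    intro v0
    rw [← Finset.sum_erase_add _ _ (Finset.mem_univ v0)]
    have h1 : ∀ w ∈ Finset.univ.erase v0, RR m lam v0 w = lam / (2*m - 1) := by
      intro w hw
      have : w ≠ v0 := (Finset.mem_erase.mp hw).1
      simp [RR, this]
    rw [Finset.sum_congr rfl h1, Finset.sum_const, Finset.card_erase_of_mem (Finset.mem_univ v0),
      Finset.card_univ, cardVt, nsmul_eq_mul]
    have hcast : ((2*m - 1 : ℕ) : ℝ) = 2*(m:ℝ) - 1 := by
      have : 1 ≤ 2*m := by omega
      push_cast [this]
      ring
    rw [hcast]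
    simp only [RR, if_pos rfl, ↓reduceIte]
    field_simp
    ring
  -- the j-row term
  have hjterm : (∑ v0 : Vt m, ∑ q : Query k m, ∑ w : Vt m,
        θ j * p j v0 * (1 / C) * RR m lam v0 w *
          (if q j ((q j).symm w) = v then (1:ℝ) else 0))
      = θ j * ((1 - lam) * p j v + (lam/(2*m - 1)) * (1 - p j v)) := by
    have step1 : ∀ v0 : Vt m, ∀ q : Query k m,
        (∑ w : Vt m, θ j * p j v0 * (1 / C) * RR m lam v0 w *
          (if q j ((q j).symm w) = v then (1:ℝ) else 0))
        = θ j * p j v0 * (1 / C) * RR m lam v0 v := by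
      intro v0 q
      have : ∀ w : Vt m, (θ j * p j v0 * (1 / C) * RR m lam v0 w *
          (if q j ((q j).symm w) = v then (1:ℝ) else 0))
          = if w = v then θ j * p j v0 * (1 / C) * RR m lam v0 w else 0 := by
        intro w
        rw [Equiv.apply_symm_apply]
        split_ifs <;> simp
      rw [Finset.sum_congr rfl (fun w _ => this w), Finset.sum_ite_eq']
      simp
    have step2 : ∀ v0 : Vt m,
        (∑ q : Query k m, ∑ w : Vt m, θ j * p j v0 * (1 / C) * RR m lam v0 w *
          (if q j ((q j).symm w) = v then (1:ℝ) else 0))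
        = θ j * p j v0 * RR m lam v0 v := by
      intro v0
      rw [Finset.sum_congr rfl (fun q _ => step1 v0 q), Finset.sum_const,
        Finset.card_univ, nsmul_eq_mul, ← hCdef]
      field_simp
    rw [Finset.sum_congr rfl (fun v0 _ => step2 v0)]
    -- now split v0 = v
    rw [← Finset.sum_erase_add _ _ (Finset.mem_univ v)]
    have h1 : ∀ v0 ∈ Finset.univ.erase v,
        θ j * p j v0 * RR m lam v0 v = θ j * (lam / (2*(m:ℝ) - 1)) * p j v0 := by
      intro v0 hv0
      have : v0 ≠ v := (Finset.mem_erase.mp hv0).1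
      simp only [RR]
      rw [if_neg]
      · push_cast; ring
      · exact fun h => this h.symm
    rw [Finset.sum_congr rfl h1, ← Finset.mul_sum,
      Finset.sum_erase_eq_sub (Finset.mem_univ v), hpsum j]
    simp only [RR, if_pos rfl]
    push_cast
    ring
  -- the off-row terms
  have hgterm : ∀ g : Fin k, g ≠ j →
      (∑ v0 : Vt m, ∑ q : Query k m, ∑ w : Vt m,
        θ g * p g v0 * (1 / C) * RR m lam v0 w *
          (if q j ((q g).symm w) = v then (1:ℝ) else 0))
      = θ g / (2*m) := by
    intro g hg
    have step1 : ∀ v0 : Vt m,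
        (∑ q : Query k m, ∑ w : Vt m, θ g * p g v0 * (1 / C) * RR m lam v0 w *
          (if q j ((q g).symm w) = v then (1:ℝ) else 0))
        = θ g * p g v0 / (2*m) := by
      intro v0
      rw [Finset.sum_comm]
      have inner : ∀ w : Vt m,
          (∑ q : Query k m, θ g * p g v0 * (1 / C) * RR m lam v0 w *
            (if q j ((q g).symm w) = v then (1:ℝ) else 0))
          = θ g * p g v0 * RR m lam v0 w / (2*m) := by
        intro w
        rw [← Finset.mul_sum, fiber_sum m k hm hg w v, ← hCdef]
        field_simp
      rw [Finset.sum_congr rfl (fun w _ => inner w)]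
      rw [← Finset.sum_div]
      have : (∑ w : Vt m, θ g * p g v0 * RR m lam v0 w)
          = θ g * p g v0 := by
        rw [← Finset.mul_sum, hRRsum v0, mul_one]
      rw [this]
    rw [Finset.sum_congr rfl (fun v0 _ => step1 v0)]
    rw [← Finset.sum_div, ← Finset.mul_sum, hpsum g, mul_one]
  -- combine
  rw [← Finset.sum_erase_add _ _ (Finset.mem_univ j)]
  rw [Finset.sum_congr rfl (fun g hgmem => hgterm g (Finset.mem_erase.mp hgmem).1)]
  rw [← Finset.sum_div, Finset.sum_erase_eq_sub (Finset.mem_univ j), hθ1, hjterm]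
  ring
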